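/- Let F : ℝ^d → ℝ be differentiable and satisfy the generalized smoothness descent inequality F(y) ≤ F(x) + ⟨∇F(x), y−x⟩ + ((L₀ + L₁‖∇F(x)‖₂)/2)‖y−x‖₂² for relevant x, y. Let γ > 0, u ∈ ℝ^d with 0 < u_min ≤ u_j ≤ 1 for all j, n ∈ ℝ^d, and define x⁺ = x − γ (u ∘ sign(n)) (coordinatewise product and sign). Then F(x⁺) ≤ F(x) − γ u_min ‖∇F(x)‖₁ + 2γ√d ‖n − ∇F(x)‖₂ + (γ² d (L₀ + L₁‖∇F(x)‖₁))/2. -/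

import Mathlib

lemma coord_bound (a u' n' umin : ℝ) (h1 : 0 < umin) (h2 : umin ≤ u') (h3 : u' ≤ 1) :
    -(a * (u' * Real.sign n')) ≤ -(umin * |a|) + 2 * |n' - a| := by
  rcases lt_trichotomy n' 0 with hn | hn | hn
  · rw [Real.sign_of_neg hn]
    rcases abs_cases a with ⟨ha, ha'⟩ | ⟨ha, ha'⟩ <;>
      rcases abs_cases (n' - a) with ⟨hb, hb'⟩ | ⟨hb, hb'⟩ <;> nlinarith
  · subst hn
    rw [Real.sign_zero]
    rcases abs_cases a with ⟨ha, ha'⟩ | ⟨ha, ha'⟩ <;>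
      rcases abs_cases (0 - a) with ⟨hb, hb'⟩ | ⟨hb, hb'⟩ <;> nlinarith
  · rw [Real.sign_of_pos hn]
    rcases abs_cases a with ⟨ha, ha'⟩ | ⟨ha, ha'⟩ <;>
      rcases abs_cases (n' - a) with ⟨hb, hb'⟩ | ⟨hb, hb'⟩ <;> nlinarith

theorem s3_one_step_descent
    (d : ℕ) (hd : 1 ≤ d) (F : EuclideanSpace ℝ (Fin d) → ℝ) (hF : Differentiable ℝ F)
    (L₀ L₁ : ℝ) (hL₀ : 0 ≤ L₀) (hL₁ : 0 ≤ L₁)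
    (hdescent : ∀ x y : EuclideanSpace ℝ (Fin d),
      F y ≤ F x + (inner ℝ (gradient F x) (y - x) : ℝ) +
        (L₀ + L₁ * ‖gradient F x‖) / 2 * ‖y - x‖ ^ 2)
    (γ : ℝ) (hγ : 0 < γ) (umin : ℝ) (humin : 0 < umin)
    (u n : EuclideanSpace ℝ (Fin d))
    (hu : ∀ j, umin ≤ u j ∧ u j ≤ 1)
    (x : EuclideanSpace ℝ (Fin d)) :
    F (x - γ • (WithLp.equiv 2 (Fin d → ℝ)).symm (fun j => u j * Real.sign (n j)))
      ≤ F x - γ * umin * (∑ j, |gradient F x j|)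
        + 2 * γ * Real.sqrt d * ‖n - gradient F x‖
        + γ ^ 2 * d * (L₀ + L₁ * (∑ j, |gradient F x j|)) / 2 := by
  set g := gradient F x with hg
  set v : EuclideanSpace ℝ (Fin d) :=
    (WithLp.equiv 2 (Fin d → ℝ)).symm (fun j => u j * Real.sign (n j)) with hv
  have hvj : ∀ j, v j = u j * Real.sign (n j) := fun j => rfl
  have h := hdescent x (x - γ • v)
  have hsub : x - γ • v - x = -(γ • v) := by abel
  rw [hsub] at h
  -- inner term
  have hinner : (inner ℝ g (-(γ • v)) : ℝ) = -(γ * ∑ j, g j * v j) := by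
    rw [inner_neg_right, real_inner_smul_right, PiLp.inner_apply]
    simp [RCLike.inner_apply, mul_comm]
  -- norm of v squared
  have hnv : ‖v‖ ^ 2 = ∑ j, (u j * Real.sign (n j)) ^ 2 := by
    rw [EuclideanSpace.norm_eq, Real.sq_sqrt (by positivity)]
    simp [hvj, mul_pow, sq_abs]
  have hnv_le : ‖v‖ ^ 2 ≤ (d : ℝ) := by
    rw [hnv]
    calc ∑ j, (u j * Real.sign (n j)) ^ 2 ≤ ∑ _j : Fin d, (1 : ℝ) := by
          apply Finset.sum_le_sum
          intro j _
          have h1 := (hu j).1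
          have h2 := (hu j).2
          rcases Real.sign_apply_eq (n j) with hs | hs | hs <;> rw [hs] <;> nlinarith
      _ = (d : ℝ) := by simp
  -- sum bound
  have hsum : -(∑ j, g j * v j) ≤ -(umin * ∑ j, |g j|) + 2 * ∑ j, |n j - g j| := by
    rw [← Finset.sum_neg_distrib]
    calc ∑ j, -(g j * v j) ≤ ∑ j, (-(umin * |g j|) + 2 * |n j - g j|) := by
          apply Finset.sum_le_sum
          intro j _
          rw [hvj j]
          exact coord_bound (g j) (u j) (n j) umin humin (hu j).1 (hu j).2
      _ = -(umin * ∑ j, |g j|) + 2 * ∑ j, |n j - g j| := by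
          rw [Finset.sum_add_distrib, Finset.mul_sum, Finset.mul_sum, Finset.sum_neg_distrib]
  -- L1 ≤ sqrt d * L2
  have hnorm_ng : ‖n - g‖ = Real.sqrt (∑ j, (n j - g j) ^ 2) := by
    rw [EuclideanSpace.norm_eq]
    congr 1
    apply Finset.sum_congr rfl
    intro j _
    simp [Real.norm_eq_abs, sq_abs]
  have hL1L2 : ∑ j, |n j - g j| ≤ Real.sqrt d * ‖n - g‖ := by
    have hcs : (∑ j, |n j - g j|) ^ 2 ≤ (d : ℝ) * ∑ j, (n j - g j) ^ 2 := by
      have := sq_sum_le_card_mul_sum_sq (s := Finset.univ) (f := fun j => |n j - g j|)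
      simpa [sq_abs] using this
    have h0 : (0 : ℝ) ≤ ∑ j, |n j - g j| := Finset.sum_nonneg fun j _ => abs_nonneg _
    rw [hnorm_ng, ← Real.sqrt_mul (Nat.cast_nonneg d)]
    calc ∑ j, |n j - g j| = Real.sqrt ((∑ j, |n j - g j|) ^ 2) := by
          rw [Real.sqrt_sq h0]
      _ ≤ Real.sqrt ((d : ℝ) * ∑ j, (n j - g j) ^ 2) := Real.sqrt_le_sqrt hcs
  -- L2 ≤ L1 for g
  have hL2L1 : ‖g‖ ≤ ∑ j, |g j| := by
    have : ∑ j, |g j| ^ 2 ≤ (∑ j, |g j|) ^ 2 :=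
      Finset.sum_sq_le_sq_sum_of_nonneg fun j _ => abs_nonneg _
    have h0 : (0 : ℝ) ≤ ∑ j, |g j| := Finset.sum_nonneg fun j _ => abs_nonneg _
    calc ‖g‖ = Real.sqrt (∑ j, |g j| ^ 2) := by
          rw [EuclideanSpace.norm_eq]; simp [Real.norm_eq_abs]
      _ ≤ Real.sqrt ((∑ j, |g j|) ^ 2) := Real.sqrt_le_sqrt this
      _ = ∑ j, |g j| := Real.sqrt_sq h0
  -- norm term
  have hnormsq : ‖-(γ • v)‖ ^ 2 = γ ^ 2 * ‖v‖ ^ 2 := by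
    rw [norm_neg, norm_smul]
    rw [mul_pow, Real.norm_eq_abs, sq_abs]
  have hgnn : (0 : ℝ) ≤ ‖g‖ := norm_nonneg _
  have hC : (L₀ + L₁ * ‖g‖) / 2 * ‖-(γ • v)‖ ^ 2
      ≤ γ ^ 2 * d * (L₀ + L₁ * (∑ j, |g j|)) / 2 := by
    rw [hnormsq]
    have h1 : L₀ + L₁ * ‖g‖ ≤ L₀ + L₁ * (∑ j, |g j|) := by nlinarith
    have h2 : (0 : ℝ) ≤ L₀ + L₁ * ‖g‖ := by positivity
    have h3 : γ ^ 2 * ‖v‖ ^ 2 ≤ γ ^ 2 * d := by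
      exact mul_le_mul_of_nonneg_left hnv_le (sq_nonneg γ)
    calc (L₀ + L₁ * ‖g‖) / 2 * (γ ^ 2 * ‖v‖ ^ 2)
        ≤ (L₀ + L₁ * (∑ j, |g j|)) / 2 * (γ ^ 2 * d) := by
          apply mul_le_mul (by linarith) h3 (by positivity) (by positivity)
      _ = γ ^ 2 * d * (L₀ + L₁ * (∑ j, |g j|)) / 2 := by ring
  have hI : (inner ℝ g (-(γ • v)) : ℝ)
      ≤ -(γ * umin * ∑ j, |g j|) + 2 * γ * Real.sqrt d * ‖n - g‖ := by
    rw [hinner]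
    have A : γ * (-(∑ j, g j * v j)) ≤ γ * (-(umin * ∑ j, |g j|) + 2 * ∑ j, |n j - g j|) :=
      mul_le_mul_of_nonneg_left hsum hγ.le
    have B : (2 * γ) * (∑ j, |n j - g j|) ≤ (2 * γ) * (Real.sqrt d * ‖n - g‖) :=
      mul_le_mul_of_nonneg_left hL1L2 (by linarith)
    linarith
  calc F (x - γ • v) ≤ F x + (inner ℝ g (-(γ • v)) : ℝ)
        + (L₀ + L₁ * ‖g‖) / 2 * ‖-(γ • v)‖ ^ 2 := h
    _ ≤ F x + (-(γ * umin * ∑ j, |g j|) + 2 * γ * Real.sqrt d * ‖n - g‖)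
        + γ ^ 2 * d * (L₀ + L₁ * (∑ j, |g j|)) / 2 := by
          have := hI; have := hC; linarith
    _ = F x - γ * umin * (∑ j, |g j|) + 2 * γ * Real.sqrt d * ‖n - g‖
        + γ ^ 2 * d * (L₀ + L₁ * (∑ j, |g j|)) / 2 := by ring
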